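/- Let {A, S, Π} be an S-node on the complex Hilbert space H such that S ≥ εI for some ε > 0 and Φ₂ is injective. Let K ⊆ H be a closed subspace with orthogonal projection P : H → H onto K, suppose PA(I − P) = 0, and suppose P∘Φ₂ is injective. Define the compressed operators on K: A_K ξ := P(Aξ), S_K ξ := P(Sξ) for ξ ∈ K, and Φ₂ᴷ := P∘Φ₂ : ℂ^p → K. Fix z in the open upper half-plane such that I − zA and I − z̄A are boundedly invertible on H and I − zA_K and I − z̄A_K are boundedly invertible on K. Then, with ρ_H(z̄, z) := i(z − z̄)Φ₂*(I − z̄A*)^{−1}S^{−1}(I − zA)^{−1}Φ₂ and ρ_K(z̄, z) := i(z − z̄)(Φ₂ᴷ)*(I − z̄A_K*)^{−1}S_K^{−1}(I − zA_K)^{−1}Φ₂ᴷ, one has 0 < −ρ_K(z̄, z) ≤ −ρ_H(z̄, z) in the Loewner order of p×p Hermitian matrices (in particular both −ρ_K(z̄,z) and −ρ_H(z̄,z) are positive definite). -/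

import Mathlib

open Matrix MeasureTheory ContinuousLinearMap
open scoped ComplexOrder

noncomputable section

/-- The matrix (in the standard basis) of a continuous linear operator on `ℂ^p`. -/
def opToMat {p : ℕ} (T : EuclideanSpace ℂ (Fin p) →L[ℂ] EuclideanSpace ℂ (Fin p)) :
    Matrix (Fin p) (Fin p) ℂ :=
  (Matrix.toEuclideanCLM (𝕜 := ℂ) (n := Fin p)).symm T

/-- The `2p × 2p` matrix `Π^* B Π` with blocks `Φ_i^* B Φ_j`, for `Π = [Φ₁ Φ₂]`. -/
def sandwich {p : ℕ} {H : Type*} [NormedAddCommGroup H] [InnerProductSpace ℂ H]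
    [CompleteSpace H] (B : H →L[ℂ] H) (Φ₁ Φ₂ : EuclideanSpace ℂ (Fin p) →L[ℂ] H) :
    Matrix (Fin p ⊕ Fin p) (Fin p ⊕ Fin p) ℂ :=
  Matrix.fromBlocks
    (opToMat (adjoint Φ₁ ∘L B ∘L Φ₁)) (opToMat (adjoint Φ₁ ∘L B ∘L Φ₂))
    (opToMat (adjoint Φ₂ ∘L B ∘L Φ₁)) (opToMat (adjoint Φ₂ ∘L B ∘L Φ₂))

/-- The frame `𝔄(S,z) = I_{2p} - i z Π^* (I - z A^*)⁻¹ S⁻¹ Π J` of an `S`-node,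
identified with a `2p × 2p` complex matrix. -/
def frameS {p : ℕ} {H : Type*} [NormedAddCommGroup H] [InnerProductSpace ℂ H]
    [CompleteSpace H] (A S : H →L[ℂ] H) (Φ₁ Φ₂ : EuclideanSpace ℂ (Fin p) →L[ℂ] H)
    (z : ℂ) : Matrix (Fin p ⊕ Fin p) (Fin p ⊕ Fin p) ℂ :=
  1 - (Complex.I * z) •
    (sandwich (Ring.inverse (1 - z • adjoint A) ∘L Ring.inverse S) Φ₁ Φ₂ *
      Matrix.fromBlocks 0 1 1 0)

/-- The `p × p` matrix `ρ(z,w) = i (w - z) Φ₂^* (I - z A^*)⁻¹ S⁻¹ (I - w A)⁻¹ Φ₂`. -/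
def rhoS {p : ℕ} {H : Type*} [NormedAddCommGroup H] [InnerProductSpace ℂ H]
    [CompleteSpace H] (A S : H →L[ℂ] H) (Φ₂ : EuclideanSpace ℂ (Fin p) →L[ℂ] H)
    (z w : ℂ) : Matrix (Fin p) (Fin p) ℂ :=
  (Complex.I * (w - z)) • opToMat (adjoint Φ₂ ∘L Ring.inverse (1 - z • adjoint A) ∘L
    Ring.inverse S ∘L Ring.inverse (1 - w • A) ∘L Φ₂)

section AuxLemmas

set_option linter.unusedSectionVars false
set_option maxHeartbeats 1000000

variable {G : Type*} [NormedAddCommGroup G] [InnerProductSpace ℂ G] [CompleteSpace G]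

lemma aux_adjoint_resolvent (A : G →L[ℂ] G) (z : ℂ) :
    Ring.inverse (1 - (starRingEnd ℂ z) • adjoint A) = adjoint (Ring.inverse (1 - z • A)) := by
  have h : star ((1 : G →L[ℂ] G) - z • A) = 1 - (starRingEnd ℂ z) • adjoint A := by
    simp [star_sub, star_smul, Complex.star_def, ContinuousLinearMap.star_eq_adjoint]
  rw [← h, Ring.inverse_star, ContinuousLinearMap.star_eq_adjoint]

lemma aux_unit_cancel₁ (U : G →L[ℂ] G) (hU : IsUnit U) (y : G) : U (Ring.inverse U y) = y := by
  have h := Ring.mul_inverse_cancel U hU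
  calc U (Ring.inverse U y) = (U * Ring.inverse U) y := rfl
  _ = y := by rw [h]; rfl

lemma aux_unit_cancel₂ (U : G →L[ℂ] G) (hU : IsUnit U) (y : G) : Ring.inverse U (U y) = y := by
  have h := Ring.inverse_mul_cancel U hU
  calc Ring.inverse U (U y) = (Ring.inverse U * U) y := rfl
  _ = y := by rw [h]; rfl

lemma aux_isSelfAdjoint_ringInverse (S : G →L[ℂ] G) (hS : IsSelfAdjoint S) :
    IsSelfAdjoint (Ring.inverse S) := by
  rw [_root_.IsSelfAdjoint, ← Ring.inverse_star, hS.star_eq]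

lemma aux_coercive_isUnit (S : G →L[ℂ] G) {ε : ℝ} (hε : 0 < ε)
    (hSpos : ∀ f : G, ε * ‖f‖ ^ 2 ≤ (inner ℂ (S f) f : ℂ).re) : IsUnit S := by
  refine isUnit_of_forall_le_norm_inner_map S (c := ⟨ε, hε.le⟩) hε (fun x => ?_)
  calc ‖x‖ ^ 2 * ((⟨ε, hε.le⟩ : NNReal) : ℝ) = ε * ‖x‖ ^ 2 := by push_cast; ring
  _ ≤ (inner ℂ (S x) x : ℂ).re := hSpos x
  _ ≤ ‖(inner ℂ (S x) x : ℂ)‖ := by exact Complex.re_le_norm _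

lemma aux_inner_sa (S : G →L[ℂ] G) (hS : IsSelfAdjoint S) (x y : G) :
    (inner ℂ (S x) y : ℂ) = inner ℂ x (S y) := by
  conv_lhs => rw [← hS.adjoint_eq]
  exact ContinuousLinearMap.adjoint_inner_left S y x

lemma aux_form_real (S : G →L[ℂ] G) (hS : IsSelfAdjoint S) (v : G) :
    ((inner ℂ (S v) v : ℂ).re : ℂ) = inner ℂ (S v) v := by
  refine Complex.conj_eq_iff_re.mp ?_
  rw [inner_conj_symm, ← aux_inner_sa S hS]

lemma aux_cs (S : G →L[ℂ] G) (hS : IsSelfAdjoint S)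
    (hpos : ∀ f : G, 0 ≤ (inner ℂ (S f) f : ℂ).re) (a b : G) :
    ‖(inner ℂ (S a) b : ℂ)‖ ^ 2 ≤ (inner ℂ (S a) a : ℂ).re * (inner ℂ (S b) b : ℂ).re := by
  let c : PreInnerProductSpace.Core ℂ G :=
  { inner := fun x y => inner ℂ (S x) y
    conj_inner_symm := fun x y => by
      show (starRingEnd ℂ) (inner ℂ (S y) x) = inner ℂ (S x) y
      rw [inner_conj_symm, ← aux_inner_sa S hS]
    re_inner_nonneg := hpos
    add_left := fun x y z => by
      show (inner ℂ (S (x + y)) z : ℂ) = inner ℂ (S x) z + inner ℂ (S y) z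
      rw [ContinuousLinearMap.map_add, inner_add_left]
    smul_left := fun x y r => by
      show (inner ℂ (S (r • x)) y : ℂ) = (starRingEnd ℂ) r * inner ℂ (S x) y
      rw [ContinuousLinearMap.map_smul, inner_smul_left] }
  have h := @InnerProductSpace.Core.inner_mul_inner_self_le ℂ G _ _ _ c a b
  have h2 : ‖(inner ℂ (S b) a : ℂ)‖ = ‖(inner ℂ (S a) b : ℂ)‖ := by
    rw [aux_inner_sa S hS b a, ← inner_conj_symm, RCLike.norm_conj]
  calc ‖(inner ℂ (S a) b : ℂ)‖ ^ 2 = ‖(inner ℂ (S a) b : ℂ)‖ * ‖(inner ℂ (S b) a : ℂ)‖ := by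
        rw [h2]; ring
  _ ≤ _ := h

lemma aux_proj_inner (K : Submodule ℂ G) [CompleteSpace K] (w : G) (g : K) :
    (inner ℂ (K.orthogonalProjectionOnto w) g : ℂ) = inner ℂ w (g : G) := by
  have h0 := K.starProjection_inner_eq_zero w (g : G) g.2
  rw [inner_sub_left, sub_eq_zero] at h0
  rw [Submodule.coe_inner]
  exact h0.symm

lemma aux_inv_form (S : G →L[ℂ] G) (hS : IsSelfAdjoint S) {ε : ℝ} (hε : 0 < ε)
    (hSpos : ∀ f : G, ε * ‖f‖ ^ 2 ≤ (inner ℂ (S f) f : ℂ).re) (u : G) :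
    (inner ℂ u (Ring.inverse S u) : ℂ) = ((inner ℂ u (Ring.inverse S u) : ℂ).re : ℂ) ∧
      ε * ‖Ring.inverse S u‖ ^ 2 ≤ (inner ℂ u (Ring.inverse S u) : ℂ).re := by
  have hU := aux_coercive_isUnit S hε hSpos
  set v := Ring.inverse S u with hvdef
  have hv : S v = u := aux_unit_cancel₁ S hU u
  have key : (inner ℂ u (Ring.inverse S u) : ℂ) = inner ℂ (S v) v := by rw [hv]
  rw [key]
  exact ⟨(aux_form_real S hS v).symm, hSpos v⟩

lemma aux_compress (S : G →L[ℂ] G) (hS : IsSelfAdjoint S) {ε : ℝ} (hε : 0 < ε)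
    (hSpos : ∀ f : G, ε * ‖f‖ ^ 2 ≤ (inner ℂ (S f) f : ℂ).re)
    (K : Submodule ℂ G) [CompleteSpace K] (h : G) :
    (inner ℂ (K.orthogonalProjectionOnto h)
      (Ring.inverse (K.orthogonalProjectionOnto ∘L S ∘L K.subtypeL)
        (K.orthogonalProjectionOnto h)) : ℂ).re ≤ (inner ℂ h (Ring.inverse S h) : ℂ).re := by
  set Pk := K.orthogonalProjectionOnto
  set SK := Pk ∘L S ∘L K.subtypeL with hSKdef
  have hpos0 : ∀ f : G, 0 ≤ (inner ℂ (S f) f : ℂ).re :=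
    fun f => le_trans (by positivity) (hSpos f)
  have hSKapp : ∀ ξ : K, SK ξ = Pk (S (ξ : G)) := fun ξ => rfl
  have hSKpos : ∀ ξ : K, ε * ‖ξ‖ ^ 2 ≤ (inner ℂ (SK ξ) ξ : ℂ).re := by
    intro ξ
    rw [hSKapp, aux_proj_inner K (S (ξ : G)) ξ]
    have : ‖ξ‖ = ‖(ξ : G)‖ := rfl
    rw [this]
    exact hSpos (ξ : G)
  have hSu := aux_coercive_isUnit S hε hSpos
  have hSKu := aux_coercive_isUnit SK hε hSKpos
  set g := Ring.inverse SK (Pk h) with hgdef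
  set v := Ring.inverse S h with hvdef
  have hg : SK g = Pk h := aux_unit_cancel₁ SK hSKu (Pk h)
  have hv : S v = h := aux_unit_cancel₁ S hSu h
  set L := (inner ℂ (Pk h) g : ℂ).re with hLdef
  set R := (inner ℂ h v : ℂ).re with hRdef
  have hL1 : (inner ℂ (Pk h) g : ℂ) = inner ℂ (S (g : G)) (g : G) := by
    rw [← hg, hSKapp, aux_proj_inner K (S (g : G)) g]
  have hL0 : 0 ≤ L := by rw [hLdef, hL1]; exact hpos0 (g : G)
  have hR1 : (inner ℂ h v : ℂ) = inner ℂ (S v) v := by rw [hv]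
  have hR0 : 0 ≤ R := by rw [hRdef, hR1]; exact hpos0 v
  have hLle : L ≤ ‖(inner ℂ (S (g : G)) v : ℂ)‖ := by
    have e1 : (inner ℂ (S (g : G)) v : ℂ) = inner ℂ (g : G) h := by
      rw [aux_inner_sa S hS, hv]
    have e2 : (inner ℂ (Pk h) g : ℂ) = inner ℂ h (g : G) := aux_proj_inner K h g
    have e3 : L = ((inner ℂ ((g : G)) h : ℂ)).re := by
      rw [hLdef, e2, ← inner_conj_symm, Complex.conj_re]
    rw [e1, e3]
    exact Complex.re_le_norm _
  have hcs : ‖(inner ℂ (S (g : G)) v : ℂ)‖ ^ 2 ≤ L * R := by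
    have := aux_cs S hS hpos0 (g : G) v
    rw [hLdef, hRdef, hL1, hR1]
    exact this
  nlinarith [hLle, hcs, hL0, hR0, norm_nonneg (inner ℂ (S (g : G)) v : ℂ)]

lemma aux_opToMat_quadform {p : ℕ}
    (T : EuclideanSpace ℂ (Fin p) →L[ℂ] EuclideanSpace ℂ (Fin p)) (x : Fin p → ℂ) :
    dotProduct (star x) ((opToMat T) *ᵥ x) =
      inner ℂ ((WithLp.equiv 2 (Fin p → ℂ)).symm x) (T ((WithLp.equiv 2 (Fin p → ℂ)).symm x)) := by
  have h1 : T ((WithLp.equiv 2 (Fin p → ℂ)).symm x) =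
      (WithLp.equiv 2 (Fin p → ℂ)).symm (Matrix.toLin' (opToMat T) x) := by
    conv_lhs => rw [← (Matrix.toEuclideanCLM (𝕜 := ℂ) (n := Fin p)).apply_symm_apply T]
    exact Matrix.toEuclideanCLM_toLp _ x
  rw [h1, Matrix.toLin'_apply]
  exact dotProduct_comm _ _

lemma aux_opToMat_star {p : ℕ}
    (T : EuclideanSpace ℂ (Fin p) →L[ℂ] EuclideanSpace ℂ (Fin p)) :
    opToMat (star T) = star (opToMat T) :=
  (Matrix.toEuclideanCLM (𝕜 := ℂ) (n := Fin p)).symm.map_star' T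

lemma aux_scalar (z : ℂ) : -(Complex.I * (z - (starRingEnd ℂ) z)) = ((2 * z.im : ℝ) : ℂ) := by
  rw [Complex.sub_conj]
  push_cast
  rw [mul_comm Complex.I]
  rw [mul_assoc, Complex.I_mul_I]
  ring

lemma aux_rho_quad {p : ℕ} (A S : G →L[ℂ] G) (Φ : EuclideanSpace ℂ (Fin p) →L[ℂ] G)
    (z : ℂ) (x : Fin p → ℂ) :
    dotProduct (star x) ((-(rhoS A S Φ (starRingEnd ℂ z) z)) *ᵥ x) =
      ((2 * z.im : ℝ) : ℂ) *
        inner ℂ (Ring.inverse (1 - z • A) (Φ ((WithLp.equiv 2 (Fin p → ℂ)).symm x)))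
          (Ring.inverse S
            (Ring.inverse (1 - z • A) (Φ ((WithLp.equiv 2 (Fin p → ℂ)).symm x)))) := by
  simp only [rhoS, Matrix.neg_mulVec, Matrix.smul_mulVec, dotProduct_neg,
    dotProduct_smul, smul_eq_mul, aux_opToMat_quadform]
  rw [← aux_scalar z, neg_mul, neg_inj]
  congr 1
  set x' := (WithLp.equiv 2 (Fin p → ℂ)).symm x
  rw [ContinuousLinearMap.comp_apply, ContinuousLinearMap.comp_apply,
    ContinuousLinearMap.comp_apply, ContinuousLinearMap.comp_apply]
  rw [adjoint_inner_right, aux_adjoint_resolvent, adjoint_inner_right]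

set_option linter.unusedTactic false in
lemma aux_rho_herm {p : ℕ} (A S : G →L[ℂ] G) (Φ : EuclideanSpace ℂ (Fin p) →L[ℂ] G)
    (hSinv : IsSelfAdjoint (Ring.inverse S)) (z : ℂ) :
    (-(rhoS A S Φ (starRingEnd ℂ z) z)).IsHermitian := by
  apply Matrix.IsHermitian.neg
  rw [Matrix.IsHermitian, ← Matrix.star_eq_conjTranspose, rhoS, star_smul, ← aux_opToMat_star]
  have hc : Complex.I * (z - (starRingEnd ℂ) z) = ((-(2 * z.im) : ℝ) : ℂ) := by
    have h := aux_scalar z; push_cast at h ⊢; linear_combination -h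
  congr 1
  · rw [hc, Complex.star_def, Complex.conj_ofReal]
  · congr 1
    rw [ContinuousLinearMap.star_eq_adjoint, aux_adjoint_resolvent A z]
    simp only [adjoint_comp, adjoint_adjoint, hSinv.adjoint_eq, ContinuousLinearMap.comp_assoc]

end AuxLemmas

set_option maxHeartbeats 1600000 in
/-- `0 < -ρ_K(conj z, z) ≤ -ρ_H(conj z, z)` for a compression of an `S`-node
with `S ≥ ε I` and injective `Φ₂`, `P Φ₂`. -/
theorem neg_rho_positive_and_monotone_under_compression
    {p : ℕ} (hp : 1 ≤ p) {H : Type*} [NormedAddCommGroup H] [InnerProductSpace ℂ H]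
    [CompleteSpace H] (A S : H →L[ℂ] H) (Φ₁ Φ₂ : EuclideanSpace ℂ (Fin p) →L[ℂ] H)
    (hS : IsSelfAdjoint S)
    (hnode : A ∘L S - S ∘L adjoint A =
      Complex.I • (Φ₁ ∘L adjoint Φ₂ + Φ₂ ∘L adjoint Φ₁))
    (ε : ℝ) (hε : 0 < ε)
    (hSpos : ∀ f : H, ε * ‖f‖ ^ 2 ≤ (inner ℂ (S f) f : ℂ).re)
    (hΦ₂ : Function.Injective Φ₂)
    (K : Submodule ℂ H) [CompleteSpace K]
    (hPA : (K.subtypeL ∘L K.orthogonalProjectionOnto) ∘L A ∘L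
      (1 - K.subtypeL ∘L K.orthogonalProjectionOnto) = 0)
    (hΦ₂K : Function.Injective (K.orthogonalProjectionOnto ∘L Φ₂))
    (z : ℂ) (hz : 0 < z.im)
    (hinv1 : IsUnit ((1 : H →L[ℂ] H) - z • A))
    (hinv2 : IsUnit ((1 : H →L[ℂ] H) - (starRingEnd ℂ z) • A))
    (hinvK1 : IsUnit ((1 : K →L[ℂ] K) -
      z • (K.orthogonalProjectionOnto ∘L A ∘L K.subtypeL)))
    (hinvK2 : IsUnit ((1 : K →L[ℂ] K) -
      (starRingEnd ℂ z) • (K.orthogonalProjectionOnto ∘L A ∘L K.subtypeL))) :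
    (-(rhoS (K.orthogonalProjectionOnto ∘L A ∘L K.subtypeL)
        (K.orthogonalProjectionOnto ∘L S ∘L K.subtypeL)
        (K.orthogonalProjectionOnto ∘L Φ₂) (starRingEnd ℂ z) z)).PosDef ∧
    (-(rhoS A S Φ₂ (starRingEnd ℂ z) z)).PosDef ∧
    (-(rhoS A S Φ₂ (starRingEnd ℂ z) z) -
      -(rhoS (K.orthogonalProjectionOnto ∘L A ∘L K.subtypeL)
          (K.orthogonalProjectionOnto ∘L S ∘L K.subtypeL)
          (K.orthogonalProjectionOnto ∘L Φ₂) (starRingEnd ℂ z) z)).PosSemidef := by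
  classical
  set Pk := K.orthogonalProjectionOnto with hPkdef
  set AK := K.orthogonalProjectionOnto ∘L A ∘L K.subtypeL with hAKdef
  set SK := K.orthogonalProjectionOnto ∘L S ∘L K.subtypeL with hSKdef
  set ΦK := K.orthogonalProjectionOnto ∘L Φ₂ with hΦKdef
  -- basic facts about S_K
  have hSKapp : ∀ ξ : K, SK ξ = Pk (S (ξ : H)) := fun ξ => rfl
  have hSK_sa : IsSelfAdjoint SK := by
    rw [_root_.IsSelfAdjoint, ContinuousLinearMap.star_eq_adjoint, hSKdef, adjoint_comp, adjoint_comp,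
      Submodule.adjoint_subtypeL, Submodule.adjoint_orthogonalProjectionOnto, hS.adjoint_eq,
      ContinuousLinearMap.comp_assoc]
  have hSKpos : ∀ ξ : K, ε * ‖ξ‖ ^ 2 ≤ (inner ℂ (SK ξ) ξ : ℂ).re := by
    intro ξ
    rw [hSKapp, aux_proj_inner K (S (ξ : H)) ξ]
    have : ‖ξ‖ = ‖(ξ : H)‖ := rfl
    rw [this]
    exact hSpos (ξ : H)
  -- invertibility of S and S_K
  have hSu : IsUnit S := aux_coercive_isUnit S hε hSpos
  have hSKu : IsUnit SK := aux_coercive_isUnit SK hε hSKpos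
  -- compression of A
  have hPkA : ∀ h0 : H, Pk (A h0) = AK (Pk h0) := by
    intro h0
    have h1 := ContinuousLinearMap.ext_iff.mp hPA h0
    simp only [ContinuousLinearMap.comp_apply, ContinuousLinearMap.sub_apply,
      ContinuousLinearMap.one_apply, ContinuousLinearMap.zero_apply, map_sub,
      Submodule.subtypeL_apply] at h1
    rw [sub_eq_zero] at h1
    have h2 : Pk (A h0) = Pk (A ((Pk h0 : K) : H)) := Subtype.coe_injective h1
    rw [h2]
    rfl
  -- intertwining of resolvents with the projection
  have hcomm : ∀ w : ℂ, IsUnit ((1 : H →L[ℂ] H) - w • A) →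
      IsUnit ((1 : K →L[ℂ] K) - w • AK) → ∀ h0 : H,
      Pk (Ring.inverse ((1 : H →L[ℂ] H) - w • A) h0) =
        Ring.inverse ((1 : K →L[ℂ] K) - w • AK) (Pk h0) := by
    intro w hw hwK h0
    set u := Ring.inverse ((1 : H →L[ℂ] H) - w • A) h0 with hudef
    have hu : ((1 : H →L[ℂ] H) - w • A) u = h0 := aux_unit_cancel₁ _ hw h0
    have hPkh : Pk h0 = ((1 : K →L[ℂ] K) - w • AK) (Pk u) := by
      rw [← hu]
      simp only [ContinuousLinearMap.sub_apply, ContinuousLinearMap.one_apply,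
        ContinuousLinearMap.smul_apply, map_sub]
      rw [ContinuousLinearMap.map_smul, hPkA u]
    rw [hPkh, aux_unit_cancel₂ _ hwK]
  -- nonnegativity of the base form
  have hpos0 : ∀ f : H, 0 ≤ (inner ℂ (S f) f : ℂ).re :=
    fun f => le_trans (by positivity) (hSpos f)
  have hSinv_sa : IsSelfAdjoint (Ring.inverse S) := aux_isSelfAdjoint_ringInverse S hS
  have hSKinv_sa : IsSelfAdjoint (Ring.inverse SK) := aux_isSelfAdjoint_ringInverse SK hSK_sa
  -- nonvanishing of the vectors u, u_K
  have hx' : ∀ x : Fin p → ℂ, x ≠ 0 → ((WithLp.equiv 2 (Fin p → ℂ)).symm x) ≠ 0 := by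
    intro x hx hc
    apply hx
    have : x = (WithLp.equiv 2 (Fin p → ℂ)) ((WithLp.equiv 2 (Fin p → ℂ)).symm x) :=
      (Equiv.apply_symm_apply _ x).symm
    rw [this, hc]
    rfl
  have huH : ∀ x : Fin p → ℂ, x ≠ 0 →
      Ring.inverse ((1 : H →L[ℂ] H) - z • A) (Φ₂ ((WithLp.equiv 2 (Fin p → ℂ)).symm x)) ≠ 0 := by
    intro x hx hc
    have h1 : Φ₂ ((WithLp.equiv 2 (Fin p → ℂ)).symm x) = 0 := by
      have := aux_unit_cancel₁ _ hinv1 (Φ₂ ((WithLp.equiv 2 (Fin p → ℂ)).symm x))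
      rw [hc, map_zero] at this
      exact this.symm
    exact hx' x hx (hΦ₂ (by rw [h1, map_zero]))
  have huK : ∀ x : Fin p → ℂ, x ≠ 0 →
      Ring.inverse ((1 : K →L[ℂ] K) - z • AK) (ΦK ((WithLp.equiv 2 (Fin p → ℂ)).symm x)) ≠ 0 := by
    intro x hx hc
    have h1 : ΦK ((WithLp.equiv 2 (Fin p → ℂ)).symm x) = 0 := by
      have := aux_unit_cancel₁ _ hinvK1 (ΦK ((WithLp.equiv 2 (Fin p → ℂ)).symm x))
      rw [hc, map_zero] at this
      exact this.symm
    exact hx' x hx (hΦ₂K (by rw [hΦKdef] at h1; rw [h1, map_zero]))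
  -- positive-definiteness of the K-form
  have posK : (-(rhoS AK SK ΦK (starRingEnd ℂ z) z)).PosDef := by
    refine Matrix.PosDef.of_dotProduct_mulVec_pos (aux_rho_herm AK SK ΦK hSKinv_sa z) (fun x hx => ?_)
    rw [aux_rho_quad AK SK ΦK z x]
    set u := Ring.inverse ((1 : K →L[ℂ] K) - z • AK) (ΦK ((WithLp.equiv 2 (Fin p → ℂ)).symm x))
    obtain ⟨hreal, hge⟩ := aux_inv_form SK hSK_sa hε hSKpos u
    rw [hreal, ← Complex.ofReal_mul]
    rw [Complex.zero_lt_real]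
    have hune : u ≠ 0 := huK x hx
    have hvne : Ring.inverse SK u ≠ 0 := by
      intro hc
      apply hune
      have := aux_unit_cancel₁ SK hSKu u
      rw [hc, map_zero] at this
      exact this.symm
    have h4 : 0 < ‖Ring.inverse SK u‖ := norm_pos_iff.mpr hvne
    have : 0 < ε * ‖Ring.inverse SK u‖ ^ 2 := mul_pos hε (pow_pos h4 2)
    have h2 : 0 < (inner ℂ u (Ring.inverse SK u) : ℂ).re := lt_of_lt_of_le this hge
    have h3 : (0:ℝ) < 2 * z.im := by linarith
    exact mul_pos h3 h2
  -- positive-definiteness of the H-form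
  have posH : (-(rhoS A S Φ₂ (starRingEnd ℂ z) z)).PosDef := by
    refine Matrix.PosDef.of_dotProduct_mulVec_pos (aux_rho_herm A S Φ₂ hSinv_sa z) (fun x hx => ?_)
    rw [aux_rho_quad A S Φ₂ z x]
    set u := Ring.inverse ((1 : H →L[ℂ] H) - z • A) (Φ₂ ((WithLp.equiv 2 (Fin p → ℂ)).symm x))
    obtain ⟨hreal, hge⟩ := aux_inv_form S hS hε hSpos u
    rw [hreal, ← Complex.ofReal_mul]
    rw [Complex.zero_lt_real]
    have hune : u ≠ 0 := huH x hx
    have hvne : Ring.inverse S u ≠ 0 := by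
      intro hc
      apply hune
      have := aux_unit_cancel₁ S hSu u
      rw [hc, map_zero] at this
      exact this.symm
    have h4 : 0 < ‖Ring.inverse S u‖ := norm_pos_iff.mpr hvne
    have : 0 < ε * ‖Ring.inverse S u‖ ^ 2 := mul_pos hε (pow_pos h4 2)
    have h2 : 0 < (inner ℂ u (Ring.inverse S u) : ℂ).re := lt_of_lt_of_le this hge
    have h3 : (0:ℝ) < 2 * z.im := by linarith
    exact mul_pos h3 h2
  refine ⟨posK, posH, ?_⟩
  -- monotonicity
  refine Matrix.PosSemidef.of_dotProduct_mulVec_nonneg ((aux_rho_herm A S Φ₂ hSinv_sa z).sub (aux_rho_herm AK SK ΦK hSKinv_sa z)) (fun x => ?_)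
  rw [Matrix.sub_mulVec, dotProduct_sub, aux_rho_quad A S Φ₂ z x,
    aux_rho_quad AK SK ΦK z x]
  set x' := (WithLp.equiv 2 (Fin p → ℂ)).symm x with hx'def
  set u := Ring.inverse ((1 : H →L[ℂ] H) - z • A) (Φ₂ x') with hudef
  have hkey : Ring.inverse ((1 : K →L[ℂ] K) - z • AK) (ΦK x') = Pk u := by
    rw [hudef, hcomm z hinv1 hinvK1 (Φ₂ x')]
    rfl
  rw [hkey]
  obtain ⟨hrealH, _⟩ := aux_inv_form S hS hε hSpos u
  obtain ⟨hrealK, _⟩ := aux_inv_form SK hSK_sa hε hSKpos (Pk u)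
  rw [hrealH, hrealK, ← Complex.ofReal_mul, ← Complex.ofReal_mul, ← Complex.ofReal_sub,
    Complex.zero_le_real]
  have hle := aux_compress S hS hε hSpos K u
  have him : 0 ≤ z.im := hz.le
  nlinarith [hle]
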